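/- Let (a_0, a_1, a_2, a_3, a_4; d_1, d_2) be a del Pezzo WCI datum. If three of the five weights coincide (i.e. a_i = a_j = a_k for some indices i < j < k), then a_4 ≤ 3. -/

import Mathlib

/-- `x` lies in the additive monoid `⟨b, c⟩` of non-negative integer combinations of `b` and `c`,
with membership taken in `ℤ`. -/
def InSpan2 (b c x : ℤ) : Prop := ∃ α β : ℕ, x = α * b + β * c

/-- `x` lies in the additive monoid `⟨b, c, d⟩` of non-negative integer combinations,
with membership taken in `ℤ`. -/
def InSpan3 (b c d x : ℤ) : Prop := ∃ α β γ : ℕ, x = α * b + β * c + γ * d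

/-- A *del Pezzo WCI datum*: Iano-Fletcher's arithmetic criteria for the general codimension-2
weighted complete intersection of multidegree `(d₁, d₂)` in `P(a 0, …, a 4)` to be a well-formed
quasi-smooth del Pezzo surface which is not an intersection with a linear cone. -/
structure IsDelPezzoWCI (a : Fin 5 → ℤ) (d₁ d₂ : ℤ) : Prop where
  a_pos : ∀ i, 0 < a i
  d₁_pos : 0 < d₁
  d₂_pos : 0 < d₂
  mono : ∀ i j : Fin 5, i ≤ j → a i ≤ a j
  d_le : d₁ ≤ d₂
  lc : ∀ i, d₁ ≠ a i ∧ d₂ ≠ a i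
  wf1 : ∀ s : Finset (Fin 5), s.card = 3 → (sᶜ.gcd a ∣ d₁ ∨ sᶜ.gcd a ∣ d₂)
  wf2 : ∀ s : Finset (Fin 5), s.card = 2 → (sᶜ.gcd a ∣ d₁ ∧ sᶜ.gcd a ∣ d₂)
  wf3 : ∀ i : Fin 5, ({i} : Finset (Fin 5))ᶜ.gcd a = 1
  qs1 : ∀ i, a i ∣ d₁ ∨ a i ∣ d₂ ∨
    ∃ e f : Fin 5, e ≠ f ∧ a i ∣ (d₁ - a e) ∧ a i ∣ (d₂ - a f)
  qs2 : ∀ i j : Fin 5, i ≠ j →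
    (InSpan2 (a i) (a j) d₁ ∧ InSpan2 (a i) (a j) d₂) ∨
    (InSpan2 (a i) (a j) d₁ ∧ ∃ e : Fin 5, InSpan2 (a i) (a j) (d₂ - a e)) ∨
    (InSpan2 (a i) (a j) d₂ ∧ ∃ e : Fin 5, InSpan2 (a i) (a j) (d₁ - a e)) ∨
    (∃ E F : Finset (Fin 5), E.card = 2 ∧ F.card = 2 ∧
      E ∪ F = ({i, j} : Finset (Fin 5))ᶜ ∧
      (∀ e ∈ E, InSpan2 (a i) (a j) (d₁ - a e)) ∧
      (∀ f ∈ F, InSpan2 (a i) (a j) (d₂ - a f)))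
  qs3 : ∀ k l m : Fin 5, k ≠ l → k ≠ m → l ≠ m →
    (InSpan3 (a k) (a l) (a m) d₁ ∧ InSpan3 (a k) (a l) (a m) d₂) ∨
    (InSpan3 (a k) (a l) (a m) d₁ ∧
      ∀ i ∈ ({k, l, m} : Finset (Fin 5))ᶜ, InSpan3 (a k) (a l) (a m) (d₂ - a i)) ∨
    (InSpan3 (a k) (a l) (a m) d₂ ∧
      ∀ i ∈ ({k, l, m} : Finset (Fin 5))ᶜ, InSpan3 (a k) (a l) (a m) (d₁ - a i))
  amp : 1 ≤ a 0 + a 1 + a 2 + a 3 + a 4 - d₁ - d₂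

section Aux

variable {a : Fin 5 → ℤ} {d₁ d₂ : ℤ}

private lemma dvd_small {r v : ℤ} (hv : 0 < v) (hvr : v < r) (h : r ∣ v) : False := by
  have := Int.le_of_dvd hv h; omega

private lemma ge_two_mul {q d : ℤ} (hq : 0 < q) (hd : 0 < d) (hdvd : q ∣ d) (hne : d ≠ q) :
    2 * q ≤ d := by
  obtain ⟨t, rfl⟩ := hdvd
  have ht1 : 1 ≤ t := by
    by_contra hc; push_neg at hc
    have ht0 : t ≤ 0 := by omega
    nlinarith
  have ht2 : t ≠ 1 := by rintro rfl; simp at hne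
  have : 2 ≤ t := by omega
  nlinarith

private lemma dvd_eq {r v : ℤ} (hr : 0 < r) (h : r ∣ v) (h1 : 0 < v) (h2 : v < 2 * r) :
    v = r := by
  obtain ⟨t, rfl⟩ := h
  have ht1 : 1 ≤ t := by
    by_contra hc; push_neg at hc
    have ht0 : t ≤ 0 := by omega
    nlinarith
  have ht2 : t < 2 := by
    by_contra hc; push_neg at hc
    nlinarith
  have : t = 1 := by omega
  subst this; ring

private lemma inSpan2_dvd {r x : ℤ} (h : InSpan2 r r x) : r ∣ x := by
  obtain ⟨α, β, rfl⟩ := h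
  exact ⟨α + β, by push_cast [mul_comm]; ring⟩

private lemma cop_helper (h : IsDelPezzoWCI a d₁ d₂) (i : Fin 5) {c : ℤ} (hc : 0 < c)
    (hall : ∀ m : Fin 5, m ≠ i → c ∣ a m) : c = 1 := by
  have h2 : c ∣ ({i}ᶜ : Finset (Fin 5)).gcd a :=
    Finset.dvd_gcd (fun m hm => hall m (by simpa using hm))
  rw [h.wf3 i] at h2
  have := Int.isUnit_iff.mp (isUnit_of_dvd_one h2)
  omega

private lemma cop2 (h : IsDelPezzoWCI a d₁ d₂) (i : Fin 5) {x y : ℤ} (hx : x ≠ 0)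
    (hall : ∀ m : Fin 5, m ≠ i → a m = x ∨ a m = y) : IsCoprime x y := by
  rw [Int.isCoprime_iff_gcd_eq_one]
  by_contra hg
  have hdx : (Int.gcd x y : ℤ) ∣ x := Int.gcd_dvd_left x y
  have hdy : (Int.gcd x y : ℤ) ∣ y := Int.gcd_dvd_right x y
  have hpos : 0 < (Int.gcd x y : ℤ) := by
    have : Int.gcd x y ≠ 0 := fun h0 => hx (Int.gcd_eq_zero_iff.mp h0).1
    positivity
  have h1 : ((Int.gcd x y : ℤ)) = 1 := cop_helper h i hpos (fun m hm => by
    rcases hall m hm with h' | h' <;> rw [h'] <;> assumption)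
  exact hg (by exact_mod_cast h1)

private lemma qs2_34 (h : IsDelPezzoWCI a d₁ d₂) {r w : ℤ}
    (h0 : a 0 = w) (h1 : a 1 = w) (h2 : a 2 = w) (h3 : a 3 = r) (h4 : a 4 = r)
    (hcw : 0 < d₁ - w) (hcwr : d₁ - w < r) (hcr : ¬ r ∣ d₁) : False := by
  have hq := h.qs2 3 4 (by decide)
  rw [h3, h4] at hq
  have hsub : ∀ e : Fin 5, InSpan2 r r (d₁ - a e) → False := by
    intro e he
    have hd := inSpan2_dvd he
    have hav : a e = w ∨ a e = r := by
      fin_cases e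
      · exact Or.inl h0
      · exact Or.inl h1
      · exact Or.inl h2
      · exact Or.inr h3
      · exact Or.inr h4
    rcases hav with hav | hav <;> rw [hav] at hd
    · exact dvd_small hcw hcwr hd
    · exact hcr (by have := dvd_add hd (dvd_refl r); simpa using this)
  rcases hq with ⟨hA, _⟩ | ⟨hA, _⟩ | ⟨_, e, he⟩ | ⟨E, F, hE, hF, hEF, hd1, _⟩
  · exact hcr (inSpan2_dvd hA)
  · exact hcr (inSpan2_dvd hA)
  · exact hsub e he
  · have hne : E.Nonempty := Finset.card_pos.mp (by omega)
    obtain ⟨e, heE⟩ := hne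
    exact hsub e (hd1 e heE)

/-- Case C : `a 0 = a 1 = a 2`. -/
private lemma lemC (h : IsDelPezzoWCI a d₁ d₂) (h01 : a 0 = a 1) (h12 : a 1 = a 2) :
    a 4 ≤ 3 := by
  by_contra hbig
  push_neg at hbig
  have ha1 : a 1 = a 0 := h01.symm
  have ha2 : a 2 = a 0 := by rw [← h12, ha1]
  have hq_pos := h.a_pos 0
  have hp_pos := h.a_pos 3
  have hr_pos := h.a_pos 4
  have hqp : a 0 ≤ a 3 := h.mono 0 3 (by decide)
  have hpr : a 3 ≤ a 4 := h.mono 3 4 (by decide)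
  have hamp := h.amp
  have hd1p := h.d₁_pos
  have hd2p := h.d₂_pos
  have hdle := h.d_le
  -- a 0 divides both degrees
  have hs := h.wf2 ({3, 4} : Finset (Fin 5)) (by decide)
  have hgq : a 0 ∣ (({3, 4} : Finset (Fin 5))ᶜ).gcd a := by
    refine Finset.dvd_gcd (fun b hb => ?_)
    simp only [Finset.mem_compl, Finset.mem_insert, Finset.mem_singleton] at hb
    fin_cases b
    · exact dvd_refl _
    · exact dvd_of_eq ha1.symm
    · exact dvd_of_eq ha2.symm
    · simp at hb
    · simp at hb
  have hqd1 : a 0 ∣ d₁ := hgq.trans hs.1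
  have hqd2 : a 0 ∣ d₂ := hgq.trans hs.2
  rcases eq_or_lt_of_le (by linarith : (1 : ℤ) ≤ a 0) with hq1 | hq2
  · -- q = 1
    have ha0 : a 0 = 1 := hq1.symm
    have hd1two : 2 ≤ d₁ := by
      have := (h.lc 0).1; rw [ha0] at this; omega
    have hd2two : 2 ≤ d₂ := by
      have := (h.lc 0).2; rw [ha0] at this; omega
    by_cases hr1 : a 4 ∣ d₁
    · have h2r := ge_two_mul hr_pos hd1p hr1 (h.lc 4).1
      linarith
    by_cases hr2 : a 4 ∣ d₂
    · have h2r := ge_two_mul hr_pos hd2p hr2 (h.lc 4).2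
      have hp4 : a 3 = a 4 := by linarith
      have hd2 : d₂ = 2 * a 4 := by linarith
      have hd1 : d₁ = 2 := by linarith
      refine qs2_34 h ha0 (ha1.trans ha0) (ha2.trans ha0) hp4 rfl ?_ ?_ ?_
      · omega
      · omega
      · rw [hd1]; intro hdvd
        have := Int.le_of_dvd (by omega) hdvd; omega
    · rcases h.qs1 4 with hc | hc | ⟨e, f, hef, he, hf⟩
      · exact hr1 hc
      · exact hr2 hc
      have hd1low : a 4 + 1 ≤ d₁ := by
        have hav : a e = 1 ∨ a e = a 3 ∨ a e = a 4 := by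
          fin_cases e
          · exact Or.inl ha0
          · exact Or.inl (ha1.trans ha0)
          · exact Or.inl (ha2.trans ha0)
          · exact Or.inr (Or.inl rfl)
          · exact Or.inr (Or.inr rfl)
        rcases hav with hav | hav | hav <;> rw [hav] at he
        · have := Int.le_of_dvd (by omega) he; linarith
        · rcases lt_trichotomy d₁ (a 3) with hlt | heq | hgt
          · exfalso
            have hu' : a 4 ∣ a 3 - d₁ := by
              have := dvd_neg.mpr he; rwa [neg_sub] at this
            have := Int.le_of_dvd (by linarith) hu'
            linarith
          · exact absurd heq (h.lc 3).1
          · have := Int.le_of_dvd (by linarith) he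
            linarith
        · exact absurd (by have := dvd_add he (dvd_refl (a 4)); simpa using this) hr1
      have hd2low : a 4 + 1 ≤ d₂ := by
        have hav : a f = 1 ∨ a f = a 3 ∨ a f = a 4 := by
          fin_cases f
          · exact Or.inl ha0
          · exact Or.inl (ha1.trans ha0)
          · exact Or.inl (ha2.trans ha0)
          · exact Or.inr (Or.inl rfl)
          · exact Or.inr (Or.inr rfl)
        rcases hav with hav | hav | hav <;> rw [hav] at hf
        · have := Int.le_of_dvd (by omega) hf; linarith
        · rcases lt_trichotomy d₂ (a 3) with hlt | heq | hgt
          · exfalso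
            have hu' : a 4 ∣ a 3 - d₂ := by
              have := dvd_neg.mpr hf; rwa [neg_sub] at this
            have := Int.le_of_dvd (by linarith) hu'
            linarith
          · exact absurd heq (h.lc 3).2
          · have := Int.le_of_dvd (by linarith) hf
            linarith
        · exact absurd (by have := dvd_add hf (dvd_refl (a 4)); simpa using this) hr2
      have hp4 : a 3 = a 4 := by linarith
      have hs1 := h.wf1 (({3, 4} : Finset (Fin 5))ᶜ) (by decide)
      rw [compl_compl] at hs1
      have hg : a 4 ∣ ({3, 4} : Finset (Fin 5)).gcd a := by
        refine Finset.dvd_gcd (fun b hb => ?_)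
        fin_cases hb
        · exact dvd_of_eq hp4.symm
        · exact dvd_refl _
      rcases hs1 with hs1 | hs1
      · exact hr1 (hg.trans hs1)
      · exact hr2 (hg.trans hs1)
  · -- q ≥ 2
    have hqp' : a 0 < a 3 := by
      rcases eq_or_lt_of_le hqp with heq | h'
      · exfalso
        have hco := cop_helper h 4 hq_pos (by
          intro m hm
          fin_cases m
          · exact dvd_refl _
          · exact dvd_of_eq ha1.symm
          · exact dvd_of_eq ha2.symm
          · exact dvd_of_eq heq
          · exact absurd rfl hm)
        omega
      · exact h'
    have hqr' : a 0 < a 4 := lt_of_lt_of_le hqp' hpr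
    have cop : IsCoprime (a 4) (a 0) := cop2 h 3 (by omega) (by
      intro m hm
      fin_cases m
      · exact Or.inr rfl
      · exact Or.inr ha1
      · exact Or.inr ha2
      · exact absurd rfl hm
      · exact Or.inl rfl)
    have hd1ge : 2 * a 0 ≤ d₁ := ge_two_mul hq_pos hd1p hqd1 (h.lc 0).1
    have hd2ge : 2 * a 0 ≤ d₂ := ge_two_mul hq_pos hd2p hqd2 (h.lc 0).2
    by_cases hr1 : a 4 ∣ d₁
    · have hqr_dvd : a 0 * a 4 ∣ d₁ := cop.symm.mul_dvd hqd1 hr1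
      have hled1 : a 0 * a 4 ≤ d₁ := Int.le_of_dvd hd1p hqr_dvd
      have hled2 : a 0 * a 4 ≤ d₂ := le_trans hled1 hdle
      nlinarith [mul_le_mul (show (1:ℤ) ≤ a 0 - 1 by linarith)
        (show (1:ℤ) ≤ a 4 - 2 by linarith) (by linarith) (by linarith)]
    by_cases hr2 : a 4 ∣ d₂
    · have hqr_dvd : a 0 * a 4 ∣ d₂ := cop.symm.mul_dvd hqd2 hr2
      have hled2 : a 0 * a 4 ≤ d₂ := Int.le_of_dvd hd2p hqr_dvd
      rcases eq_or_lt_of_le (show (2:ℤ) ≤ a 0 by omega) with hq2' | hq3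
      · -- a 0 = 2
        have ha02 : a 0 = 2 := hq2'.symm
        have cop_p : IsCoprime (a 3) (a 0) := cop2 h 4 (by omega) (by
          intro m hm
          fin_cases m
          · exact Or.inr rfl
          · exact Or.inr ha1
          · exact Or.inr ha2
          · exact Or.inl rfl
          · exact absurd rfl hm)
        have hodd_p : ¬ (2:ℤ) ∣ a 3 := by
          intro h2p
          obtain ⟨u, v, huv⟩ := cop_p
          have hx1 : (2:ℤ) ∣ u * a 3 := h2p.mul_left u
          have hx2 : (2:ℤ) ∣ v * a 0 := by rw [ha02]; exact ⟨v, by ring⟩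
          have := dvd_add hx1 hx2
          rw [huv] at this; omega
        have hodd_r : ¬ (2:ℤ) ∣ a 4 := by
          intro h2r
          obtain ⟨u, v, huv⟩ := cop
          have hx1 : (2:ℤ) ∣ u * a 4 := h2r.mul_left u
          have hx2 : (2:ℤ) ∣ v * a 0 := by rw [ha02]; exact ⟨v, by ring⟩
          have := dvd_add hx1 hx2
          rw [huv] at this; omega
        have hr3 : 3 ≤ a 4 := by omega
        have hd2ge' : 2 * a 4 ≤ d₂ := by nlinarith
        have hp4 : a 3 = a 4 := by
          have hle1 : a 4 ≤ a 3 + 1 := by linarith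
          omega
        have hd2eq : d₂ = 2 * a 4 := by
          have h24 : 2 * a 4 ∣ d₂ := by rw [← ha02]; exact hqr_dvd
          have := dvd_eq (by linarith) h24 hd2p (by linarith)
          linarith
        have hd1eq : d₁ = 4 := by
          have h2d1 : (2:ℤ) ∣ d₁ := by rw [← ha02]; exact hqd1
          have : d₁ ≤ 5 := by linarith
          omega
        have hnr4 : ¬ a 4 ∣ d₁ := by
          rw [hd1eq]; intro hdvd
          have := Int.le_of_dvd (by omega) hdvd
          have h43 : a 4 = 3 := by omega
          rw [h43] at hdvd; omega
        exact qs2_34 h ha02 (ha1.trans ha02) (ha2.trans ha02) hp4 rfl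
          (by omega) (by omega) hnr4
      · -- a 0 ≥ 3
        nlinarith [mul_le_mul_of_nonneg_left (show (1:ℤ) ≤ a 0 - 2 by linarith)
          (show (0:ℤ) ≤ a 4 by linarith)]
    · -- neither divides
      rcases h.qs1 4 with hc | hc | ⟨e, f, hef, he, hf⟩
      · exact hr1 hc
      · exact hr2 hc
      have hd2le : d₂ ≤ a 0 + a 3 + a 4 - 1 := by linarith
      have hkey : ∀ d : ℤ, 2 * a 0 ≤ d → d ≤ a 0 + a 3 + a 4 - 1 → a 0 ∣ d →
          a 4 ∣ d - a 0 → False := by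
        intro d hdge hdle' ha0d hdvd
        have hpos : 0 < d - a 0 := by linarith
        have hlt : d - a 0 < 2 * a 4 := by linarith
        have heq := dvd_eq hr_pos hdvd hpos hlt
        have h04' : a 0 ∣ a 4 := by
          have hz : a 0 ∣ d - a 0 := dvd_sub ha0d (dvd_refl _)
          rwa [heq] at hz
        have hco := cop_helper h 3 hq_pos (by
          intro m hm
          fin_cases m
          · exact dvd_refl _
          · exact dvd_of_eq ha1.symm
          · exact dvd_of_eq ha2.symm
          · exact absurd rfl hm
          · exact h04')
        omega
      have he3 : e = 3 := by
        fin_cases e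
        · exact absurd (by have h' : a 4 ∣ d₁ - a 0 := he; exact h')
            (fun h' => hkey d₁ hd1ge (by linarith) hqd1 h')
        · exfalso
          have h' : a 4 ∣ d₁ - a 1 := he
          rw [ha1] at h'
          exact hkey d₁ hd1ge (by linarith) hqd1 h'
        · exfalso
          have h' : a 4 ∣ d₁ - a 2 := he
          rw [ha2] at h'
          exact hkey d₁ hd1ge (by linarith) hqd1 h'
        · rfl
        · exfalso
          have h' : a 4 ∣ d₁ - a 4 := he
          exact hr1 (by have := dvd_add h' (dvd_refl (a 4)); simpa using this)
      have hf3 : f = 3 := by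
        fin_cases f
        · exfalso
          have h' : a 4 ∣ d₂ - a 0 := hf
          exact hkey d₂ hd2ge hd2le hqd2 h'
        · exfalso
          have h' : a 4 ∣ d₂ - a 1 := hf
          rw [ha1] at h'
          exact hkey d₂ hd2ge hd2le hqd2 h'
        · exfalso
          have h' : a 4 ∣ d₂ - a 2 := hf
          rw [ha2] at h'
          exact hkey d₂ hd2ge hd2le hqd2 h'
        · rfl
        · exfalso
          have h' : a 4 ∣ d₂ - a 4 := hf
          exact hr2 (by have := dvd_add h' (dvd_refl (a 4)); simpa using this)
      exact hef (he3.trans hf3.symm)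

/-- Case B : `a 1 = a 2 = a 3`. -/
private lemma lemB (h : IsDelPezzoWCI a d₁ d₂) (h12 : a 1 = a 2) (h23 : a 2 = a 3) :
    a 4 ≤ 3 := by
  have ha2 : a 2 = a 1 := h12.symm
  have ha3 : a 3 = a 1 := by rw [← h23, ha2]
  have h0_pos := h.a_pos 0
  have hq_pos := h.a_pos 1
  have hr_pos := h.a_pos 4
  have h01 : a 0 ≤ a 1 := h.mono 0 1 (by decide)
  have h14 : a 1 ≤ a 4 := h.mono 1 4 (by decide)
  have hamp := h.amp
  have hd1p := h.d₁_pos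
  have hd2p := h.d₂_pos
  have hdle := h.d_le
  rcases eq_or_lt_of_le (by linarith : (1 : ℤ) ≤ a 1) with hq1 | hq2
  · -- a 1 = 1 : also a 0 = 1, reduce to case C
    exact lemC h (by omega) h12
  -- a 1 ≥ 2 henceforth
  have hp : a 0 < a 1 := by
    rcases eq_or_lt_of_le h01 with heq | h'
    · exfalso
      have hco := cop_helper h 4 hq_pos (by
        intro m hm
        fin_cases m
        · exact dvd_of_eq heq.symm
        · exact dvd_refl _
        · exact dvd_of_eq ha2.symm
        · exact dvd_of_eq ha3.symm
        · exact absurd rfl hm)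
      omega
    · exact h'
  have hr : a 1 < a 4 := by
    rcases eq_or_lt_of_le h14 with heq | h'
    · exfalso
      have hco := cop_helper h 0 hq_pos (by
        intro m hm
        fin_cases m
        · exact absurd rfl hm
        · exact dvd_refl _
        · exact dvd_of_eq ha2.symm
        · exact dvd_of_eq ha3.symm
        · exact dvd_of_eq heq)
      omega
    · exact h'
  -- a 1 divides both degrees
  have hs := h.wf2 ({0, 4} : Finset (Fin 5)) (by decide)
  have hgq : a 1 ∣ (({0, 4} : Finset (Fin 5))ᶜ).gcd a := by
    refine Finset.dvd_gcd (fun b hb => ?_)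
    simp only [Finset.mem_compl, Finset.mem_insert, Finset.mem_singleton] at hb
    fin_cases b
    · simp at hb
    · exact dvd_refl _
    · exact dvd_of_eq ha2.symm
    · exact dvd_of_eq ha3.symm
    · simp at hb
  have hqd1 : a 1 ∣ d₁ := hgq.trans hs.1
  have hqd2 : a 1 ∣ d₂ := hgq.trans hs.2
  have cop : IsCoprime (a 4) (a 1) := cop2 h 0 (by omega) (by
    intro m hm
    fin_cases m
    · exact absurd rfl hm
    · exact Or.inr rfl
    · exact Or.inr ha2
    · exact Or.inr ha3
    · exact Or.inl rfl)
  have hd1ge : 2 * a 1 ≤ d₁ := ge_two_mul hq_pos hd1p hqd1 (h.lc 1).1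
  have hd2ge : 2 * a 1 ≤ d₂ := ge_two_mul hq_pos hd2p hqd2 (h.lc 1).2
  exfalso
  by_cases hr1 : a 4 ∣ d₁
  · have hqr_dvd : a 1 * a 4 ∣ d₁ := cop.symm.mul_dvd hqd1 hr1
    have hled1 : a 1 * a 4 ≤ d₁ := Int.le_of_dvd hd1p hqr_dvd
    have hled2 : a 1 * a 4 ≤ d₂ := le_trans hled1 hdle
    nlinarith [mul_le_mul (show (1:ℤ) ≤ 2 * a 1 - 1 by linarith)
      (show (1:ℤ) ≤ a 4 - 2 by linarith) (by linarith) (by linarith)]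
  by_cases hr2 : a 4 ∣ d₂
  · have hqr_dvd : a 1 * a 4 ∣ d₂ := cop.symm.mul_dvd hqd2 hr2
    have hled2 : a 1 * a 4 ≤ d₂ := Int.le_of_dvd hd2p hqr_dvd
    nlinarith [mul_le_mul (show (1:ℤ) ≤ a 1 - 1 by linarith)
      (show (1:ℤ) ≤ a 4 - 2 by linarith) (by linarith) (by linarith)]
  · rcases h.qs1 4 with hc | hc | ⟨e, f, hef, he, hf⟩
    · exact hr1 hc
    · exact hr2 hc
    have hd2le : d₂ ≤ a 0 + a 1 + a 4 - 1 := by linarith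
    have hkey : ∀ d : ℤ, 2 * a 1 ≤ d → d ≤ a 0 + a 1 + a 4 - 1 → a 1 ∣ d →
        a 4 ∣ d - a 1 → False := by
      intro d hdge hdle' ha1d hdvd
      have hpos : 0 < d - a 1 := by linarith
      have hlt : d - a 1 < 2 * a 4 := by linarith
      have heq := dvd_eq hr_pos hdvd hpos hlt
      have h14' : a 1 ∣ a 4 := by
        have hz : a 1 ∣ d - a 1 := dvd_sub ha1d (dvd_refl _)
        rwa [heq] at hz
      have hco := cop_helper h 0 hq_pos (by
        intro m hm
        fin_cases m
        · exact absurd rfl hm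
        · exact dvd_refl _
        · exact dvd_of_eq ha2.symm
        · exact dvd_of_eq ha3.symm
        · exact h14')
      omega
    have he0 : e = 0 := by
      fin_cases e
      · rfl
      · exfalso
        have h' : a 4 ∣ d₁ - a 1 := he
        exact hkey d₁ hd1ge (by linarith) hqd1 h'
      · exfalso
        have h' : a 4 ∣ d₁ - a 2 := he
        rw [ha2] at h'
        exact hkey d₁ hd1ge (by linarith) hqd1 h'
      · exfalso
        have h' : a 4 ∣ d₁ - a 3 := he
        rw [ha3] at h'
        exact hkey d₁ hd1ge (by linarith) hqd1 h'
      · exfalso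
        have h' : a 4 ∣ d₁ - a 4 := he
        exact hr1 (by have := dvd_add h' (dvd_refl (a 4)); simpa using this)
    have hf0 : f = 0 := by
      fin_cases f
      · rfl
      · exfalso
        have h' : a 4 ∣ d₂ - a 1 := hf
        exact hkey d₂ hd2ge hd2le hqd2 h'
      · exfalso
        have h' : a 4 ∣ d₂ - a 2 := hf
        rw [ha2] at h'
        exact hkey d₂ hd2ge hd2le hqd2 h'
      · exfalso
        have h' : a 4 ∣ d₂ - a 3 := hf
        rw [ha3] at h'
        exact hkey d₂ hd2ge hd2le hqd2 h'
      · exfalso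
        have h' : a 4 ∣ d₂ - a 4 := hf
        exact hr2 (by have := dvd_add h' (dvd_refl (a 4)); simpa using this)
    exact hef (he0.trans hf0.symm)

/-- Case A : `a 2 = a 3 = a 4`. -/
private lemma lemA (h : IsDelPezzoWCI a d₁ d₂) (h23 : a 2 = a 3) (h34 : a 3 = a 4) :
    a 4 ≤ 3 := by
  by_contra hbig
  push_neg at hbig
  have ha3 : a 3 = a 4 := h34
  have ha2 : a 2 = a 4 := h23.trans h34
  have h0_pos := h.a_pos 0
  have h1_pos := h.a_pos 1
  have hq_pos := h.a_pos 4
  have h01 : a 0 ≤ a 1 := h.mono 0 1 (by decide)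
  have h14 : a 1 ≤ a 4 := by
    have := h.mono 1 2 (by decide); linarith
  have hamp := h.amp
  have hd1p := h.d₁_pos
  have hd2p := h.d₂_pos
  have hdle := h.d_le
  have cop : IsCoprime (a 1) (a 4) := cop2 h 0 (by omega) (by
    intro m hm
    fin_cases m
    · exact absurd rfl hm
    · exact Or.inl rfl
    · exact Or.inr ha2
    · exact Or.inr ha3
    · exact Or.inr rfl)
  have hr : a 1 < a 4 := by
    rcases eq_or_lt_of_le h14 with heq | h'
    · exfalso
      have hco := cop_helper h 0 hq_pos (by
        intro m hm
        fin_cases m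
        · exact absurd rfl hm
        · exact dvd_of_eq heq.symm
        · exact dvd_of_eq ha2.symm
        · exact dvd_of_eq ha3.symm
        · exact dvd_refl _)
      omega
    · exact h'
  -- a 4 divides both degrees
  have hs := h.wf2 ({0, 1} : Finset (Fin 5)) (by decide)
  have hgq : a 4 ∣ (({0, 1} : Finset (Fin 5))ᶜ).gcd a := by
    refine Finset.dvd_gcd (fun b hb => ?_)
    simp only [Finset.mem_compl, Finset.mem_insert, Finset.mem_singleton] at hb
    fin_cases b
    · simp at hb
    · simp at hb
    · exact dvd_of_eq ha2.symm
    · exact dvd_of_eq ha3.symm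
    · exact dvd_refl _
  have hqd1 : a 4 ∣ d₁ := hgq.trans hs.1
  have hqd2 : a 4 ∣ d₂ := hgq.trans hs.2
  have hd1ge : 2 * a 4 ≤ d₁ := ge_two_mul hq_pos hd1p hqd1 (h.lc 4).1
  have hd2ge : 2 * a 4 ≤ d₂ := ge_two_mul hq_pos hd2p hqd2 (h.lc 4).2
  have hd2eq : d₂ = 2 * a 4 := by
    have hz : a 4 ∣ d₂ - a 4 := dvd_sub hqd2 (dvd_refl _)
    have := dvd_eq hq_pos hz (by linarith) (by linarith)
    linarith
  have hd1eq : d₁ = 2 * a 4 := by linarith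
  have hsum : a 4 + 1 ≤ a 0 + a 1 := by linarith
  -- helper: a 1 ∣ d (= 2 * a 4) is impossible
  have hnd : ∀ d : ℤ, d = 2 * a 4 → a 1 ∣ d → False := by
    intro d hd hdvd
    rw [hd] at hdvd
    have h2 : a 1 ∣ 2 := cop.dvd_of_dvd_mul_right hdvd
    have := Int.le_of_dvd (by omega) h2
    linarith
  -- helper: a 1 ∣ a 4 is impossible
  have hna : a 1 ∣ a 4 → False := by
    intro hdvd
    obtain ⟨u, v, huv⟩ := cop
    have h1 : a 1 ∣ u * a 1 := Dvd.dvd.mul_left (dvd_refl _) u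
    have h2 : a 1 ∣ v * a 4 := hdvd.mul_left v
    have := dvd_add h1 h2
    rw [huv] at this
    have := Int.le_of_dvd (by omega) this
    linarith
  have h24 : 2 * a 4 - a 4 = a 4 := by ring
  rcases h.qs1 1 with hc | hc | ⟨e, f, hef, he, hf⟩
  · exact hnd d₁ hd1eq hc
  · exact hnd d₂ hd2eq hc
  have he0 : e = 0 := by
    fin_cases e
    · rfl
    · exfalso
      have h' : a 1 ∣ d₁ - a 1 := he
      exact hnd d₁ hd1eq (by have := dvd_add h' (dvd_refl (a 1)); simpa using this)
    · exfalso
      have h' : a 1 ∣ d₁ - a 2 := he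
      rw [ha2, hd1eq] at h'
      rw [h24] at h'; exact hna h'
    · exfalso
      have h' : a 1 ∣ d₁ - a 3 := he
      rw [ha3, hd1eq] at h'
      rw [h24] at h'; exact hna h'
    · exfalso
      have h' : a 1 ∣ d₁ - a 4 := he
      rw [hd1eq] at h'
      rw [h24] at h'; exact hna h'
  have hf0 : f = 0 := by
    fin_cases f
    · rfl
    · exfalso
      have h' : a 1 ∣ d₂ - a 1 := hf
      exact hnd d₂ hd2eq (by have := dvd_add h' (dvd_refl (a 1)); simpa using this)
    · exfalso
      have h' : a 1 ∣ d₂ - a 2 := hf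
      rw [ha2, hd2eq] at h'
      rw [h24] at h'; exact hna h'
    · exfalso
      have h' : a 1 ∣ d₂ - a 3 := hf
      rw [ha3, hd2eq] at h'
      rw [h24] at h'; exact hna h'
    · exfalso
      have h' : a 1 ∣ d₂ - a 4 := hf
      rw [hd2eq] at h'
      rw [h24] at h'; exact hna h'
  exact absurd (he0.trans hf0.symm) hef

end Aux

theorem lemma3_three_equal_weights (a : Fin 5 → ℤ) (d₁ d₂ : ℤ) (h : IsDelPezzoWCI a d₁ d₂)
    (hthree : ∃ i j k : Fin 5, i < j ∧ j < k ∧ a i = a j ∧ a j = a k) :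
    a 4 ≤ 3 := by
  obtain ⟨i, j, k, hij, hjk, hij2, hjk2⟩ := hthree
  have hik : a i = a k := hij2.trans hjk2
  have key : ∀ m n : Fin 5, i ≤ m → m ≤ n → n ≤ k → a m = a n := by
    intro m n h1 h2 h3
    have e1 := h.mono m n h2
    have e2 := h.mono n k h3
    have e3 := h.mono i m h1
    linarith
  have hival : (i : ℕ) < (j : ℕ) := hij
  have hjval : (j : ℕ) < (k : ℕ) := hjk
  have hk5 : (k : ℕ) < 5 := k.isLt
  have v0 : ((0 : Fin 5) : ℕ) = 0 := rfl
  have v1 : ((1 : Fin 5) : ℕ) = 1 := rfl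
  have v2 : ((2 : Fin 5) : ℕ) = 2 := rfl
  have v3 : ((3 : Fin 5) : ℕ) = 3 := rfl
  have v4 : ((4 : Fin 5) : ℕ) = 4 := rfl
  rcases (by omega : (i : ℕ) = 0 ∨ (i : ℕ) = 1 ∨ (i : ℕ) = 2) with hi | hi | hi
  · -- i = 0, so k ≥ 2 and a 0 = a 1 = a 2
    have h02 : a 0 = a 2 := key 0 2 (by rw [Fin.le_def, v0]; omega)
      (by rw [Fin.le_def, v0, v2]; omega) (by rw [Fin.le_def, v2]; omega)
    have h01' : a 0 = a 1 :=
      le_antisymm (h.mono 0 1 (by decide)) (by have := h.mono 1 2 (by decide); linarith)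
    exact lemC h h01' (by linarith)
  · -- i = 1, so k ≥ 3 and a 1 = a 2 = a 3
    have h13 : a 1 = a 3 := key 1 3 (by rw [Fin.le_def, v1]; omega)
      (by rw [Fin.le_def, v1, v3]; omega) (by rw [Fin.le_def, v3]; omega)
    have h12' : a 1 = a 2 :=
      le_antisymm (h.mono 1 2 (by decide)) (by have := h.mono 2 3 (by decide); linarith)
    exact lemB h h12' (by linarith)
  · -- i = 2, so k = 4 and a 2 = a 3 = a 4
    have h24 : a 2 = a 4 := key 2 4 (by rw [Fin.le_def, v2]; omega)
      (by rw [Fin.le_def, v2, v4]; omega) (by rw [Fin.le_def, v4]; omega)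
    have h23' : a 2 = a 3 :=
      le_antisymm (h.mono 2 3 (by decide)) (by have := h.mono 3 4 (by decide); linarith)
    exact lemA h h23' (by linarith)
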